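/- For a prime p and nonnegative integer a, B(ℓ, p^a) = p^{(ℓ-1)a} · (p^{-a-1}; p^{-1})_{ℓ-1} / (p^{-1}; p^{-1})_{ℓ-1}, where (z;q)_r = (1-z)(1-qz)···(1-q^{r-1}z) is the q-Pochhammer symbol. -/

import Mathlib

/-- B(ℓ,n) as a sum over ℓ-tuples of positive integers with product n. -/
def Btuple (ℓ n : ℕ) : ℕ :=
  ∑ f ∈ (Fintype.piFinset fun _ : Fin ℓ => Finset.range (n+1)) |>.filter
      (fun f => ∏ i, f i = n),
    ∏ i : Fin ℓ, (f i) ^ (ℓ - 1 - (i : ℕ))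

/-- The q-Pochhammer symbol (z;q)_r = ∏_{j=0}^{r-1} (1 - q^j z). -/
def qPoch (z q : ℝ) (r : ℕ) : ℝ := ∏ j ∈ Finset.range r, (1 - q ^ j * z)

open Finset

/-- Exponent-tuple version of B. -/
def Ttuple (p ℓ a : ℕ) : ℕ :=
  ∑ e ∈ Finset.Nat.antidiagonalTuple ℓ a, ∏ i : Fin ℓ, p ^ ((ℓ - 1 - (i : ℕ)) * e i)

lemma sum_antidiagonalTuple_succ {M : Type*} [AddCommMonoid M] (k n : ℕ)
    (g : (Fin (k+1) → ℕ) → M) :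
    ∑ e ∈ Finset.Nat.antidiagonalTuple (k+1) n, g e =
      ∑ km ∈ Finset.HasAntidiagonal.antidiagonal n,
        ∑ x ∈ Finset.Nat.antidiagonalTuple k km.2, g (Fin.cons km.1 x) := by
  rw [← Finset.sum_sigma (Finset.HasAntidiagonal.antidiagonal n)
      (fun km => Finset.Nat.antidiagonalTuple k km.2) (fun y => g (Fin.cons y.1.1 y.2))]
  refine Finset.sum_nbij' (fun e => ⟨(e 0, ∑ i, Fin.tail e i), Fin.tail e⟩)
    (fun y => Fin.cons y.1.1 y.2) ?_ ?_ ?_ ?_ ?_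
  · intro e he
    rw [Finset.Nat.mem_antidiagonalTuple] at he
    refine Finset.mem_sigma.2 ⟨?_, ?_⟩
    · rw [Finset.HasAntidiagonal.mem_antidiagonal, ← he, Fin.sum_univ_succ]
      rfl
    · rw [Finset.Nat.mem_antidiagonalTuple]
  · intro y hy
    rw [Finset.mem_sigma, Finset.HasAntidiagonal.mem_antidiagonal,
      Finset.Nat.mem_antidiagonalTuple] at hy
    rw [Finset.Nat.mem_antidiagonalTuple, Fin.sum_univ_succ]
    simp only [Fin.cons_zero, Fin.cons_succ]
    rw [hy.2, hy.1]
  · intro e _; exact Fin.cons_self_tail e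
  · intro y hy
    rw [Finset.mem_sigma, Finset.HasAntidiagonal.mem_antidiagonal,
      Finset.Nat.mem_antidiagonalTuple] at hy
    obtain ⟨⟨k1, m⟩, x⟩ := y
    simp only [Fin.cons_zero, Fin.tail_cons]
    have h2 : ∑ i, x i = m := hy.2
    rw [h2]
  · intro e _; rw [Fin.cons_self_tail]

lemma Ttuple_zero (p ℓ : ℕ) : Ttuple p ℓ 0 = 1 := by
  simp [Ttuple, Finset.Nat.antidiagonalTuple_zero_right]

lemma Ttuple_one (p a : ℕ) : Ttuple p 1 a = 1 := by
  simp [Ttuple, Finset.Nat.antidiagonalTuple_one]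

lemma Ttuple_succ (p ℓ n : ℕ) :
    Ttuple p (ℓ+1) n = ∑ km ∈ Finset.HasAntidiagonal.antidiagonal n,
      p ^ (ℓ * km.1) * Ttuple p ℓ km.2 := by
  rw [Ttuple, sum_antidiagonalTuple_succ]
  refine Finset.sum_congr rfl fun km _ => ?_
  rw [Ttuple, Finset.mul_sum]
  refine Finset.sum_congr rfl fun x _ => ?_
  rw [Fin.prod_univ_succ]
  simp only [Fin.cons_zero, Fin.cons_succ, Fin.val_zero, Fin.val_succ]
  have h0 : ℓ + 1 - 1 - 0 = ℓ := by omega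
  rw [h0]
  congr 1
  refine Finset.prod_congr rfl fun i _ => ?_
  have h1 : ℓ + 1 - 1 - ((i:ℕ) + 1) = ℓ - 1 - (i:ℕ) := by omega
  rw [h1]

lemma Ttuple_pascal (p ℓ n : ℕ) :
    Ttuple p (ℓ+1) (n+1) = Ttuple p ℓ (n+1) + p ^ ℓ * Ttuple p (ℓ+1) n := by
  rw [Ttuple_succ, Finset.Nat.antidiagonal_succ, Finset.sum_cons]
  simp only [Finset.sum_map, Function.Embedding.coeFn_mk, Function.Embedding.prodMap,
    Prod.map_fst, Prod.map_snd, Function.Embedding.refl_apply]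
  rw [Ttuple_succ, Finset.mul_sum]
  congr 1
  · simp
  · refine Finset.sum_congr rfl fun km _ => ?_
    rw [show ℓ * (Nat.succ km.1) = ℓ + ℓ * km.1 by rw [Nat.mul_succ]; exact Nat.add_comm _ _, pow_add, mul_assoc]

lemma Ttuple_key (p : ℕ) : ∀ ℓ a : ℕ,
    (Ttuple p (ℓ+1) a : ℤ) * ∏ j ∈ Finset.range ℓ, ((p:ℤ) ^ (j+1) - 1) =
      ∏ j ∈ Finset.range ℓ, ((p:ℤ) ^ (a+j+1) - 1) := by
  intro ℓ
  induction ℓ with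
  | zero => intro a; simp [Ttuple_one]
  | succ ℓ ih =>
    intro a
    induction a with
    | zero => simp [Ttuple_zero]
    | succ a iha =>
      have hrec := Ttuple_pascal p (ℓ+1) a
      have key : (Ttuple p (ℓ+2) (a+1) : ℤ) =
          (Ttuple p (ℓ+1) (a+1) : ℤ) + (p:ℤ)^(ℓ+1) * (Ttuple p (ℓ+2) a : ℤ) := by
        exact_mod_cast congrArg (Nat.cast : ℕ → ℤ) hrec
      have hD : ∏ j ∈ Finset.range (ℓ+1), ((p:ℤ) ^ (j+1) - 1) =
          (∏ j ∈ Finset.range ℓ, ((p:ℤ) ^ (j+1) - 1)) * ((p:ℤ)^(ℓ+1) - 1) := by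
        rw [Finset.prod_range_succ]
      have h1 := ih (a+1)
      have hA : ∏ j ∈ Finset.range (ℓ+1), ((p:ℤ) ^ (a+j+1) - 1) =
          ((p:ℤ)^(a+1) - 1) * ∏ j ∈ Finset.range ℓ, ((p:ℤ) ^ (a+1+j+1) - 1) := by
        rw [Finset.prod_range_succ', mul_comm]
        congr 1
        refine Finset.prod_congr rfl fun j _ => ?_
        rw [show a + (j+1) + 1 = a+1+j+1 by omega]
      have hA' : ∏ j ∈ Finset.range (ℓ+1), ((p:ℤ) ^ (a+1+j+1) - 1) =
          (∏ j ∈ Finset.range ℓ, ((p:ℤ) ^ (a+1+j+1) - 1)) * ((p:ℤ)^(a+1+ℓ+1) - 1) := by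
        rw [Finset.prod_range_succ]
      linear_combination key * (∏ j ∈ Finset.range (ℓ+1), ((p:ℤ) ^ (j+1) - 1)) +
        (p:ℤ)^(ℓ+1) * iha + (p:ℤ)^(ℓ+1) * hA +
        (Ttuple p (ℓ+1) (a+1) : ℤ) * hD + ((p:ℤ)^(ℓ+1) - 1) * h1 - hA'

lemma Btuple_eq_Ttuple (p : ℕ) (hp : p.Prime) (ℓ a : ℕ) :
    Btuple ℓ (p ^ a) = Ttuple p ℓ a := by
  rw [Btuple, Ttuple]
  refine Finset.sum_nbij' (fun f => fun i => Nat.log p (f i))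
    (fun e => fun i => p ^ e i) ?_ ?_ ?_ ?_ ?_
  · intro f hf
    rw [Finset.mem_filter] at hf
    have hpow : ∀ i, p ^ Nat.log p (f i) = f i := by
      intro i
      have hdvd : f i ∣ p ^ a := hf.2 ▸ Finset.dvd_prod_of_mem f (Finset.mem_univ i)
      obtain ⟨c, _, hc⟩ := (Nat.dvd_prime_pow hp).1 hdvd
      rw [hc, Nat.log_pow hp.one_lt]
    rw [Finset.Nat.mem_antidiagonalTuple]
    have : p ^ (∑ i, Nat.log p (f i)) = p ^ a := by
      rw [← hf.2, ← Finset.prod_pow_eq_pow_sum]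
      exact Finset.prod_congr rfl fun i _ => hpow i
    exact Nat.pow_right_injective hp.two_le this
  · intro e he
    rw [Finset.Nat.mem_antidiagonalTuple] at he
    rw [Finset.mem_filter]
    constructor
    · rw [Fintype.mem_piFinset]
      intro i
      rw [Finset.mem_range, Nat.lt_succ_iff]
      exact Nat.pow_le_pow_right hp.pos (he ▸ Finset.single_le_sum
        (fun i _ => Nat.zero_le (e i)) (Finset.mem_univ i))
    · rw [Finset.prod_pow_eq_pow_sum, he]
  · intro f hf
    rw [Finset.mem_filter] at hf
    funext i
    show p ^ Nat.log p (f i) = f i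
    have hdvd : f i ∣ p ^ a := hf.2 ▸ Finset.dvd_prod_of_mem f (Finset.mem_univ i)
    obtain ⟨c, _, hc⟩ := (Nat.dvd_prime_pow hp).1 hdvd
    rw [hc, Nat.log_pow hp.one_lt]
  · intro e _
    funext i
    show Nat.log p (p ^ e i) = e i
    exact Nat.log_pow hp.one_lt _
  · intro f hf
    rw [Finset.mem_filter] at hf
    show ∏ i : Fin ℓ, f i ^ (ℓ - 1 - (i:ℕ)) =
      ∏ i : Fin ℓ, p ^ ((ℓ - 1 - (i:ℕ)) * Nat.log p (f i))
    refine Finset.prod_congr rfl fun i _ => ?_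
    have hdvd : f i ∣ p ^ a := hf.2 ▸ Finset.dvd_prod_of_mem f (Finset.mem_univ i)
    obtain ⟨c, _, hc⟩ := (Nat.dvd_prime_pow hp).1 hdvd
    rw [hc, Nat.log_pow hp.one_lt, ← pow_mul, Nat.mul_comm]

/-- B(ℓ, p^a) = p^{(ℓ-1)a} (p^{-a-1};p^{-1})_{ℓ-1} / (p^{-1};p^{-1})_{ℓ-1}. -/
theorem stmt_3 (ℓ : ℕ) (hℓ : 2 ≤ ℓ) (p : ℕ) (hp : p.Prime) (a : ℕ) :
    (Btuple ℓ (p ^ a) : ℝ) =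
      (p : ℝ) ^ ((ℓ - 1) * a) *
        qPoch ((1 / (p : ℝ)) ^ (a + 1)) (1 / (p : ℝ)) (ℓ - 1) /
        qPoch (1 / (p : ℝ)) (1 / (p : ℝ)) (ℓ - 1) := by
  obtain ⟨k, rfl⟩ : ∃ k, ℓ = k + 2 := ⟨ℓ - 2, by omega⟩
  have hr : k + 2 - 1 = k + 1 := rfl
  have hppos : (0:ℝ) < (p:ℝ) := by exact_mod_cast hp.pos
  have hpne : (p:ℝ) ≠ 0 := ne_of_gt hppos
  have hp1 : (1:ℝ) < (p:ℝ) := by exact_mod_cast hp.one_lt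
  -- the integer identity, cast to ℝ
  have hkey : (Btuple (k+2) (p^a) : ℝ) * ∏ j ∈ Finset.range (k+1), ((p:ℝ) ^ (j+1) - 1) =
      ∏ j ∈ Finset.range (k+1), ((p:ℝ) ^ (a+j+1) - 1) := by
    have h := Ttuple_key p (k+1) a
    rw [← Btuple_eq_Ttuple p hp (k+2) a] at h
    exact_mod_cast h
  have hBne : ∏ j ∈ Finset.range (k+1), ((p:ℝ) ^ (j+1) - 1) ≠ 0 := by
    refine Finset.prod_ne_zero_iff.2 fun j _ => ?_
    have : (1:ℝ) < (p:ℝ) ^ (j+1) := one_lt_pow₀ hp1 (Nat.succ_ne_zero j)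
    linarith
  have hB : (Btuple (k+2) (p^a) : ℝ) =
      (∏ j ∈ Finset.range (k+1), ((p:ℝ) ^ (a+j+1) - 1)) /
        ∏ j ∈ Finset.range (k+1), ((p:ℝ) ^ (j+1) - 1) := by
    field_simp [hBne] at hkey ⊢
    linarith [hkey]
  rw [hB, hr]
  -- rewrite qPoch values
  have hnum : qPoch ((1 / (p : ℝ)) ^ (a + 1)) (1 / (p : ℝ)) (k+1) =
      (∏ j ∈ Finset.range (k+1), ((p:ℝ) ^ (a+j+1) - 1)) *
        ∏ j ∈ Finset.range (k+1), ((p:ℝ)⁻¹) ^ (a+j+1) := by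
    rw [qPoch, ← Finset.prod_mul_distrib]
    refine Finset.prod_congr rfl fun j _ => ?_
    rw [one_div, ← pow_add, show j + (a+1) = a+j+1 from by omega, inv_pow]
    have hpow : ((p:ℝ))^(a+j+1) ≠ 0 := pow_ne_zero _ hpne
    field_simp
  have hden : qPoch (1 / (p : ℝ)) (1 / (p : ℝ)) (k+1) =
      (∏ j ∈ Finset.range (k+1), ((p:ℝ) ^ (j+1) - 1)) *
        ∏ j ∈ Finset.range (k+1), ((p:ℝ)⁻¹) ^ (j+1) := by
    rw [qPoch, ← Finset.prod_mul_distrib]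
    refine Finset.prod_congr rfl fun j _ => ?_
    rw [one_div, ← pow_succ, inv_pow]
    have hpow : ((p:ℝ))^(j+1) ≠ 0 := pow_ne_zero _ hpne
    field_simp
  rw [hnum, hden]
  have hsplit : ∏ j ∈ Finset.range (k+1), ((p:ℝ)⁻¹) ^ (a+j+1) =
      ((p:ℝ)⁻¹) ^ ((k+1)*a) * ∏ j ∈ Finset.range (k+1), ((p:ℝ)⁻¹) ^ (j+1) := by
    have hc : ((p:ℝ)⁻¹) ^ ((k+1)*a) = ∏ _j ∈ Finset.range (k+1), ((p:ℝ)⁻¹) ^ a := by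
      rw [Finset.prod_const, Finset.card_range, ← pow_mul, Nat.mul_comm]
    rw [hc, ← Finset.prod_mul_distrib]
    refine Finset.prod_congr rfl fun j _ => ?_
    rw [← pow_add, show a + (j+1) = a+j+1 from by omega]
  set A := ∏ j ∈ Finset.range (k+1), ((p:ℝ) ^ (a+j+1) - 1) with hA
  set B := ∏ j ∈ Finset.range (k+1), ((p:ℝ) ^ (j+1) - 1) with hBdef
  set u := ∏ j ∈ Finset.range (k+1), ((p:ℝ)⁻¹) ^ (j+1) with hu
  have hune : u ≠ 0 := Finset.prod_ne_zero_iff.2 fun j _ => pow_ne_zero _ (inv_ne_zero hpne)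
  have hcancel : (p:ℝ) ^ ((k+1)*a) * ((p:ℝ)⁻¹) ^ ((k+1)*a) = 1 := by
    rw [← mul_pow, mul_inv_cancel₀ hpne, one_pow]
  rw [hsplit]
  have hnum2 : (p:ℝ) ^ ((k+1)*a) * (A * (((p:ℝ)⁻¹) ^ ((k+1)*a) * u)) = A * u := by
    calc (p:ℝ) ^ ((k+1)*a) * (A * (((p:ℝ)⁻¹) ^ ((k+1)*a) * u))
        = ((p:ℝ) ^ ((k+1)*a) * ((p:ℝ)⁻¹) ^ ((k+1)*a)) * (A * u) := by ring
      _ = A * u := by rw [hcancel, one_mul]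
  rw [hnum2, mul_div_mul_right A B hune]
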